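/- Let (A, p_A) be an ensemble of functions U^n → Im A satisfying the strong (α_A, β_A)-hash condition and (B, p_B) an ensemble of functions V^n → Im B satisfying the strong (α_B, β_B)-hash condition, with A and B independent. Then for every G ⊆ U^n × V^n and (u,v) ∈ U^n × V^n: P_{A,B}({(A,B) : (G \ {(u,v)}) ∩ (C_A(Au) × C_B(Bv)) ≠ ∅}) ≤ |G|α_Aα_B/(|Im A||Im B|) + (max_{v'∈G_V}|G_{U|V}(v')|)·α_A(β_B+1)/|Im A| + (max_{u'∈G_U}|G_{V|U}(u')|)·α_B(β_A+1)/|Im B| + β_A + β_B + β_Aβ_B. -/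

import Mathlib

open Finset
open scoped Classical

/-- Collision probability `p_A({A : Au = Au'})` for an ensemble of functions. -/
noncomputable def collP {𝒜 X B : Type*} [Fintype 𝒜] (p : 𝒜 → ℝ)
    (F : 𝒜 → X → B) (u u' : X) : ℝ :=
  ∑ a : 𝒜, if F a u = F a u' then p a else 0

/-- The strong (α,β)-hash condition for an ensemble of functions `X → B`. -/
noncomputable def StrongHash {𝒜 X B : Type*} [Fintype 𝒜] [Fintype X] [Fintype B]
    (p : 𝒜 → ℝ) (F : 𝒜 → X → B) (α β : ℝ) : Prop :=
  ∀ u : X,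
    ∑ u' ∈ (Finset.univ.erase u).filter
        (fun u' => α / (Fintype.card B : ℝ) < collP p F u u'),
      collP p F u u' ≤ β

lemma collP_nonneg {𝒜 X B : Type*} [Fintype 𝒜] {p : 𝒜 → ℝ} (F : 𝒜 → X → B)
    (hp : ∀ a, 0 ≤ p a) (x y : X) : 0 ≤ collP p F x y := by
  apply Finset.sum_nonneg; intro a _; split <;> simp [hp a]

lemma collP_self {𝒜 X B : Type*} [Fintype 𝒜] {p : 𝒜 → ℝ} (F : 𝒜 → X → B)
    (hp1 : ∑ a : 𝒜, p a = 1) (x : X) : collP p F x x = 1 := by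
  simp [collP, hp1]

lemma collP_comm {𝒜 X B : Type*} [Fintype 𝒜] (p : 𝒜 → ℝ) (F : 𝒜 → X → B)
    (x y : X) : collP p F x y = collP p F y x := by
  unfold collP
  refine Finset.sum_congr rfl fun a _ => ?_
  simp [eq_comm]

set_option maxHeartbeats 1000000 in
/-- Collision-resistance property for two independent ensembles with different domains. -/
theorem stmt4 {U V BA BB 𝒜 ℬ : Type*} [Fintype U] [Fintype V] [Fintype BA] [Fintype BB]
    [Fintype 𝒜] [Fintype ℬ] (n : ℕ)
    (p : 𝒜 → ℝ) (hp : ∀ a, 0 ≤ p a) (hp1 : ∑ a : 𝒜, p a = 1)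
    (q : ℬ → ℝ) (hq : ∀ b, 0 ≤ q b) (hq1 : ∑ b : ℬ, q b = 1)
    (F : 𝒜 → (Fin n → U) → BA) (Gf : ℬ → (Fin n → V) → BB)
    (αA βA αB βB : ℝ) (hαA : 0 ≤ αA) (hβA : 0 ≤ βA) (hαB : 0 ≤ αB) (hβB : 0 ≤ βB)
    (hA : StrongHash p F αA βA) (hB : StrongHash q Gf αB βB)
    (G : Finset ((Fin n → U) × (Fin n → V))) (u : Fin n → U) (v : Fin n → V) :
    ∑ a : 𝒜, ∑ b : ℬ,
        (if ∃ w ∈ G.erase (u, v), F a w.1 = F a u ∧ Gf b w.2 = Gf b v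
          then p a * q b else 0) ≤
      (G.card : ℝ) * αA * αB / ((Fintype.card BA : ℝ) * (Fintype.card BB : ℝ))
        + (((G.image Prod.snd).sup fun v' => (G.filter fun w => w.2 = v').card : ℕ) : ℝ)
            * αA * (βB + 1) / (Fintype.card BA : ℝ)
        + (((G.image Prod.fst).sup fun u' => (G.filter fun w => w.1 = u').card : ℕ) : ℝ)
            * αB * (βA + 1) / (Fintype.card BB : ℝ)
        + βA + βB + βA * βB := by
  classical
  -- nonemptiness facts
  have h𝒜 : Nonempty 𝒜 := by
    by_contra h
    rw [not_nonempty_iff] at h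
    rw [Finset.univ_eq_empty, Finset.sum_empty] at hp1
    norm_num at hp1
  have hℬ : Nonempty ℬ := by
    by_contra h
    rw [not_nonempty_iff] at h
    rw [Finset.univ_eq_empty, Finset.sum_empty] at hq1
    norm_num at hq1
  have hBA : Nonempty BA := ⟨F (Classical.arbitrary 𝒜) u⟩
  have hBB : Nonempty BB := ⟨Gf (Classical.arbitrary ℬ) v⟩
  have hKA : (0 : ℝ) < (Fintype.card BA : ℝ) := by exact_mod_cast Fintype.card_pos
  have hKB : (0 : ℝ) < (Fintype.card BB : ℝ) := by exact_mod_cast Fintype.card_pos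
  set KA : ℝ := (Fintype.card BA : ℝ) with hKAdef
  set KB : ℝ := (Fintype.card BB : ℝ) with hKBdef
  set PA : (Fin n → U) → ℝ := fun u' => collP p F u u' with hPAdef
  set PB : (Fin n → V) → ℝ := fun v' => collP q Gf v v' with hPBdef
  have hPAnn : ∀ x, 0 ≤ PA x := fun x => collP_nonneg F hp u x
  have hPBnn : ∀ x, 0 ≤ PB x := fun x => collP_nonneg Gf hq v x
  have hPAu : PA u = 1 := collP_self F hp1 u
  have hPBv : PB v = 1 := collP_self Gf hq1 v
  set E := G.erase (u, v) with hEdef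
  set Mv : ℕ := (G.image Prod.snd).sup fun v' => (G.filter fun w => w.2 = v').card with hMvdef
  set Mu : ℕ := (G.image Prod.fst).sup fun u' => (G.filter fun w => w.1 = u').card with hMudef
  -- Step 1: union bound
  have step1 : (∑ a : 𝒜, ∑ b : ℬ,
      (if ∃ w ∈ G.erase (u, v), F a w.1 = F a u ∧ Gf b w.2 = Gf b v
        then p a * q b else 0)) ≤ ∑ w ∈ E, PA w.1 * PB w.2 := by
    have h1 : ∀ a b, (if ∃ w ∈ G.erase (u, v), F a w.1 = F a u ∧ Gf b w.2 = Gf b v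
        then p a * q b else 0)
        ≤ ∑ w ∈ E, (if F a w.1 = F a u ∧ Gf b w.2 = Gf b v then p a * q b else 0) := by
      intro a b
      have hnn : ∀ w ∈ E, (0:ℝ) ≤ (if F a w.1 = F a u ∧ Gf b w.2 = Gf b v
          then p a * q b else 0) := by
        intro w _
        split
        · exact mul_nonneg (hp a) (hq b)
        · exact le_refl 0
      split
      · next h =>
        obtain ⟨w, hw, hw2⟩ := h
        calc p a * q b
            = (if F a w.1 = F a u ∧ Gf b w.2 = Gf b v then p a * q b else 0) := by
              rw [if_pos hw2]
          _ ≤ _ := Finset.single_le_sum hnn hw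
      · exact Finset.sum_nonneg hnn
    calc ∑ a : 𝒜, ∑ b : ℬ,
          (if ∃ w ∈ G.erase (u, v), F a w.1 = F a u ∧ Gf b w.2 = Gf b v
            then p a * q b else 0)
        ≤ ∑ a : 𝒜, ∑ b : ℬ, ∑ w ∈ E,
            (if F a w.1 = F a u ∧ Gf b w.2 = Gf b v then p a * q b else 0) := by
          exact Finset.sum_le_sum fun a _ => Finset.sum_le_sum fun b _ => h1 a b
      _ = ∑ a : 𝒜, ∑ w ∈ E, ∑ b : ℬ,
            (if F a w.1 = F a u ∧ Gf b w.2 = Gf b v then p a * q b else 0) :=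
          Finset.sum_congr rfl fun a _ => Finset.sum_comm
      _ = ∑ w ∈ E, ∑ a : 𝒜, ∑ b : ℬ,
            (if F a w.1 = F a u ∧ Gf b w.2 = Gf b v then p a * q b else 0) :=
          Finset.sum_comm
      _ = ∑ w ∈ E, PA w.1 * PB w.2 := by
          refine Finset.sum_congr rfl fun w _ => ?_
          have : ∀ (a : 𝒜) (b : ℬ),
              (if F a w.1 = F a u ∧ Gf b w.2 = Gf b v then p a * q b else 0)
              = (if F a w.1 = F a u then p a else 0) * (if Gf b w.2 = Gf b v then q b else 0) := by
            intro a b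
            by_cases h1 : F a w.1 = F a u <;> by_cases h2 : Gf b w.2 = Gf b v <;>
              simp [h1, h2]
          simp_rw [this, ← Finset.mul_sum, ← Finset.sum_mul]
          have e1 : (∑ a : 𝒜, if F a w.1 = F a u then p a else 0) = PA w.1 :=
            collP_comm p F w.1 u
          have e2 : (∑ b : ℬ, if Gf b w.2 = Gf b v then q b else 0) = PB w.2 :=
            collP_comm q Gf w.2 v
          rw [e1, e2]
  -- hash condition sums
  set SA : Finset (Fin n → U) :=
    (Finset.univ.erase u).filter (fun u' => αA / KA < PA u') with hSAdef
  set SB : Finset (Fin n → V) :=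
    (Finset.univ.erase v).filter (fun v' => αB / KB < PB v') with hSBdef
  have hSA : ∑ u' ∈ SA, PA u' ≤ βA := by
    rw [hSAdef, hPAdef, hKAdef]; convert hA u using 2 <;> (ext x; simp)
  have hSB : ∑ v' ∈ SB, PB v' ≤ βB := by
    rw [hSBdef, hPBdef, hKBdef]; convert hB v using 2 <;> (ext x; simp)
  have huSA : u ∉ SA := fun h => (Finset.mem_erase.1 (Finset.mem_filter.1 h).1).1 rfl
  have hvSB : v ∉ SB := fun h => (Finset.mem_erase.1 (Finset.mem_filter.1 h).1).1 rfl
  have hsumSA : ∑ u' ∈ insert u SA, PA u' ≤ βA + 1 := by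
    rw [Finset.sum_insert huSA, hPAu]; linarith
  have hsumSB : ∑ v' ∈ insert v SB, PB v' ≤ βB + 1 := by
    rw [Finset.sum_insert hvSB, hPBv]; linarith
  have hsumSAnn : (0:ℝ) ≤ ∑ u' ∈ insert u SA, PA u' :=
    Finset.sum_nonneg fun x _ => hPAnn x
  have hsumSBnn : (0:ℝ) ≤ ∑ v' ∈ insert v SB, PB v' :=
    Finset.sum_nonneg fun x _ => hPBnn x
  -- classification predicates
  set abig : (Fin n → U) → Prop := fun u' => αA / KA < PA u' ∨ u' = u with habig
  set bbig : (Fin n → V) → Prop := fun v' => αB / KB < PB v' ∨ v' = v with hbbig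
  have hsmallA : ∀ x, ¬ abig x → PA x ≤ αA / KA := by
    intro x hx; simp only [habig] at hx; push_neg at hx; exact hx.1
  have hsmallB : ∀ x, ¬ bbig x → PB x ≤ αB / KB := by
    intro x hx; simp only [hbbig] at hx; push_neg at hx; exact hx.1
  have hbigA : ∀ x, abig x → x ∈ insert u SA := by
    intro x hx
    rcases eq_or_ne x u with h | h
    · exact h ▸ Finset.mem_insert_self u SA
    · rcases hx with hx | hx
      · exact Finset.mem_insert_of_mem (Finset.mem_filter.2
          ⟨Finset.mem_erase.2 ⟨h, Finset.mem_univ x⟩, hx⟩)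
      · exact absurd hx h
  have hbigB : ∀ x, bbig x → x ∈ insert v SB := by
    intro x hx
    rcases eq_or_ne x v with h | h
    · exact h ▸ Finset.mem_insert_self v SB
    · rcases hx with hx | hx
      · exact Finset.mem_insert_of_mem (Finset.mem_filter.2
          ⟨Finset.mem_erase.2 ⟨h, Finset.mem_univ x⟩, hx⟩)
      · exact absurd hx h
  -- splitting the sum over E
  set f : (Fin n → U) × (Fin n → V) → ℝ := fun w => PA w.1 * PB w.2 with hfdef
  have hfnn : ∀ w, 0 ≤ f w := fun w => mul_nonneg (hPAnn w.1) (hPBnn w.2)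
  have split1 := Finset.sum_filter_add_sum_filter_not E (fun w => abig w.1) f
  have split2 := Finset.sum_filter_add_sum_filter_not
    (E.filter (fun w => abig w.1)) (fun w => bbig w.2) f
  have split3 := Finset.sum_filter_add_sum_filter_not
    (E.filter (fun w => ¬ abig w.1)) (fun w => bbig w.2) f
  -- Bound (i): both small
  have bound1 : ∑ w ∈ (E.filter (fun w => ¬ abig w.1)).filter (fun w => ¬ bbig w.2), f w
      ≤ (G.card : ℝ) * αA * αB / (KA * KB) := by
    have h1 : ∀ w ∈ (E.filter (fun w => ¬ abig w.1)).filter (fun w => ¬ bbig w.2),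
        f w ≤ (αA / KA) * (αB / KB) := by
      intro w hw
      obtain ⟨hw1, hw2⟩ := Finset.mem_filter.1 hw
      obtain ⟨_, hw3⟩ := Finset.mem_filter.1 hw1
      exact mul_le_mul (hsmallA _ hw3) (hsmallB _ hw2) (hPBnn w.2)
        (div_nonneg hαA hKA.le)
    calc ∑ w ∈ (E.filter (fun w => ¬ abig w.1)).filter (fun w => ¬ bbig w.2), f w
        ≤ ((E.filter (fun w => ¬ abig w.1)).filter (fun w => ¬ bbig w.2)).card
            • ((αA / KA) * (αB / KB)) := Finset.sum_le_card_nsmul _ _ _ h1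
      _ = (((E.filter (fun w => ¬ abig w.1)).filter (fun w => ¬ bbig w.2)).card : ℝ)
            * ((αA / KA) * (αB / KB)) := by rw [nsmul_eq_mul]
      _ ≤ (G.card : ℝ) * ((αA / KA) * (αB / KB)) := by
          apply mul_le_mul_of_nonneg_right
          · exact_mod_cast Finset.card_le_card
              (((Finset.filter_subset _ _).trans (Finset.filter_subset _ _)).trans
                (Finset.erase_subset _ _))
          · positivity
      _ = (G.card : ℝ) * αA * αB / (KA * KB) := by field_simp
  -- Bound (ii): A small, B big
  have bound2 : ∑ w ∈ (E.filter (fun w => ¬ abig w.1)).filter (fun w => bbig w.2), f w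
      ≤ (Mv : ℝ) * αA * (βB + 1) / KA := by
    set T := (E.filter (fun w => ¬ abig w.1)).filter (fun w => bbig w.2) with hTdef
    have hstep : ∑ w ∈ T, f w ≤ (αA / KA) * ∑ w ∈ T, PB w.2 := by
      rw [Finset.mul_sum]
      refine Finset.sum_le_sum fun w hw => ?_
      obtain ⟨hw1, _⟩ := Finset.mem_filter.1 hw
      obtain ⟨_, hw3⟩ := Finset.mem_filter.1 hw1
      exact mul_le_mul_of_nonneg_right (hsmallA _ hw3) (hPBnn w.2)
    have hmaps : ∀ w ∈ T, w.2 ∈ insert v SB := by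
      intro w hw
      exact hbigB _ (Finset.mem_filter.1 hw).2
    have hfiber := Finset.sum_fiberwise_of_maps_to hmaps (fun w => PB w.2)
    have hcard : ∀ v' : Fin n → V, ((T.filter (fun w => w.2 = v')).card : ℝ) ≤ (Mv : ℝ) := by
      intro v'
      have hsub : T.filter (fun w => w.2 = v') ⊆ G.filter (fun w => w.2 = v') := by
        refine Finset.filter_subset_filter _ ?_
        exact ((Finset.filter_subset _ _).trans (Finset.filter_subset _ _)).trans
          (Finset.erase_subset _ _)
      rcases (G.filter (fun w => w.2 = v')).eq_empty_or_nonempty with h | h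
      · have : T.filter (fun w => w.2 = v') = ∅ :=
          Finset.subset_empty.1 (h ▸ hsub)
        simp [this]
      · obtain ⟨w, hw⟩ := h
        obtain ⟨hwG, hw2⟩ := Finset.mem_filter.1 hw
        have him : v' ∈ G.image Prod.snd := Finset.mem_image.2 ⟨w, hwG, hw2⟩
        have : (G.filter (fun w => w.2 = v')).card ≤ Mv := by
          rw [hMvdef]
          exact Finset.le_sup (f := fun v' => (G.filter fun w => w.2 = v').card) him
        exact_mod_cast (Finset.card_le_card hsub).trans this
    have hinner : ∑ w ∈ T, PB w.2 ≤ (Mv : ℝ) * (βB + 1) := by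
      rw [← hfiber]
      calc ∑ v' ∈ insert v SB, ∑ w ∈ T.filter (fun w => w.2 = v'), PB w.2
          = ∑ v' ∈ insert v SB, ((T.filter (fun w => w.2 = v')).card : ℝ) * PB v' := by
            refine Finset.sum_congr rfl fun v' _ => ?_
            rw [Finset.sum_congr rfl (fun w hw => by
              rw [(Finset.mem_filter.1 hw).2]), Finset.sum_const, nsmul_eq_mul]
        _ ≤ ∑ v' ∈ insert v SB, (Mv : ℝ) * PB v' := by
            refine Finset.sum_le_sum fun v' _ => ?_
            exact mul_le_mul_of_nonneg_right (hcard v') (hPBnn v')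
        _ = (Mv : ℝ) * ∑ v' ∈ insert v SB, PB v' := by rw [Finset.mul_sum]
        _ ≤ (Mv : ℝ) * (βB + 1) := by
            exact mul_le_mul_of_nonneg_left hsumSB (by positivity)
    calc ∑ w ∈ T, f w ≤ (αA / KA) * ∑ w ∈ T, PB w.2 := hstep
      _ ≤ (αA / KA) * ((Mv : ℝ) * (βB + 1)) := by
          apply mul_le_mul_of_nonneg_left hinner (by positivity)
      _ = (Mv : ℝ) * αA * (βB + 1) / KA := by field_simp
  -- Bound (iii): A big, B small
  have bound3 : ∑ w ∈ (E.filter (fun w => abig w.1)).filter (fun w => ¬ bbig w.2), f w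
      ≤ (Mu : ℝ) * αB * (βA + 1) / KB := by
    set T := (E.filter (fun w => abig w.1)).filter (fun w => ¬ bbig w.2) with hTdef
    have hstep : ∑ w ∈ T, f w ≤ (αB / KB) * ∑ w ∈ T, PA w.1 := by
      rw [Finset.mul_sum]
      refine Finset.sum_le_sum fun w hw => ?_
      have hw2 := (Finset.mem_filter.1 hw).2
      calc f w = PB w.2 * PA w.1 := mul_comm _ _
        _ ≤ (αB / KB) * PA w.1 :=
          mul_le_mul_of_nonneg_right (hsmallB _ hw2) (hPAnn w.1)
    have hmaps : ∀ w ∈ T, w.1 ∈ insert u SA := by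
      intro w hw
      exact hbigA _ (Finset.mem_filter.1 (Finset.mem_filter.1 hw).1).2
    have hfiber := Finset.sum_fiberwise_of_maps_to hmaps (fun w => PA w.1)
    have hcard : ∀ u' : Fin n → U, ((T.filter (fun w => w.1 = u')).card : ℝ) ≤ (Mu : ℝ) := by
      intro u'
      have hsub : T.filter (fun w => w.1 = u') ⊆ G.filter (fun w => w.1 = u') := by
        refine Finset.filter_subset_filter _ ?_
        exact ((Finset.filter_subset _ _).trans (Finset.filter_subset _ _)).trans
          (Finset.erase_subset _ _)
      rcases (G.filter (fun w => w.1 = u')).eq_empty_or_nonempty with h | h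
      · have : T.filter (fun w => w.1 = u') = ∅ :=
          Finset.subset_empty.1 (h ▸ hsub)
        simp [this]
      · obtain ⟨w, hw⟩ := h
        obtain ⟨hwG, hw2⟩ := Finset.mem_filter.1 hw
        have him : u' ∈ G.image Prod.fst := Finset.mem_image.2 ⟨w, hwG, hw2⟩
        have : (G.filter (fun w => w.1 = u')).card ≤ Mu := by
          rw [hMudef]
          exact Finset.le_sup (f := fun u' => (G.filter fun w => w.1 = u').card) him
        exact_mod_cast (Finset.card_le_card hsub).trans this
    have hinner : ∑ w ∈ T, PA w.1 ≤ (Mu : ℝ) * (βA + 1) := by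
      rw [← hfiber]
      calc ∑ u' ∈ insert u SA, ∑ w ∈ T.filter (fun w => w.1 = u'), PA w.1
          = ∑ u' ∈ insert u SA, ((T.filter (fun w => w.1 = u')).card : ℝ) * PA u' := by
            refine Finset.sum_congr rfl fun u' _ => ?_
            rw [Finset.sum_congr rfl (fun w hw => by
              rw [(Finset.mem_filter.1 hw).2]), Finset.sum_const, nsmul_eq_mul]
        _ ≤ ∑ u' ∈ insert u SA, (Mu : ℝ) * PA u' := by
            refine Finset.sum_le_sum fun u' _ => ?_
            exact mul_le_mul_of_nonneg_right (hcard u') (hPAnn u')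
        _ = (Mu : ℝ) * ∑ u' ∈ insert u SA, PA u' := by rw [Finset.mul_sum]
        _ ≤ (Mu : ℝ) * (βA + 1) := by
            exact mul_le_mul_of_nonneg_left hsumSA (by positivity)
    calc ∑ w ∈ T, f w ≤ (αB / KB) * ∑ w ∈ T, PA w.1 := hstep
      _ ≤ (αB / KB) * ((Mu : ℝ) * (βA + 1)) := by
          apply mul_le_mul_of_nonneg_left hinner (by positivity)
      _ = (Mu : ℝ) * αB * (βA + 1) / KB := by field_simp
  -- Bound (iv): both big
  have bound4 : ∑ w ∈ (E.filter (fun w => abig w.1)).filter (fun w => bbig w.2), f w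
      ≤ βA + βB + βA * βB := by
    have hsub : (E.filter (fun w => abig w.1)).filter (fun w => bbig w.2)
        ⊆ ((insert u SA) ×ˢ (insert v SB)).erase (u, v) := by
      intro w hw
      obtain ⟨hw1, hw2⟩ := Finset.mem_filter.1 hw
      obtain ⟨hwE, hw3⟩ := Finset.mem_filter.1 hw1
      refine Finset.mem_erase.2 ⟨(Finset.mem_erase.1 hwE).1, ?_⟩
      exact Finset.mem_product.2 ⟨hbigA _ hw3, hbigB _ hw2⟩
    have hmem : ((u : Fin n → U), v) ∈ (insert u SA) ×ˢ (insert v SB) :=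
      Finset.mem_product.2 ⟨Finset.mem_insert_self _ _, Finset.mem_insert_self _ _⟩
    calc ∑ w ∈ (E.filter (fun w => abig w.1)).filter (fun w => bbig w.2), f w
        ≤ ∑ w ∈ ((insert u SA) ×ˢ (insert v SB)).erase (u, v), f w :=
          Finset.sum_le_sum_of_subset_of_nonneg hsub fun w _ _ => hfnn w
      _ = (∑ w ∈ (insert u SA) ×ˢ (insert v SB), f w) - f (u, v) :=
          Finset.sum_erase_eq_sub hmem
      _ = (∑ u' ∈ insert u SA, PA u') * (∑ v' ∈ insert v SB, PB v') - 1 := by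
          rw [Finset.sum_product, ← Finset.sum_mul_sum]
          simp [hfdef, hPAu, hPBv]
      _ ≤ (βA + 1) * (βB + 1) - 1 := by
          have := mul_le_mul hsumSA hsumSB hsumSBnn (by linarith)
          linarith
      _ = βA + βB + βA * βB := by ring
  -- combine
  have hfinal : ∑ w ∈ E, f w ≤
      (G.card : ℝ) * αA * αB / (KA * KB) + (Mv : ℝ) * αA * (βB + 1) / KA
        + (Mu : ℝ) * αB * (βA + 1) / KB + (βA + βB + βA * βB) := by
    rw [← split1, ← split2, ← split3]
    linarith [bound1, bound2, bound3, bound4]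
  calc ∑ a : 𝒜, ∑ b : ℬ,
        (if ∃ w ∈ G.erase (u, v), F a w.1 = F a u ∧ Gf b w.2 = Gf b v
          then p a * q b else 0)
      ≤ ∑ w ∈ E, f w := step1
    _ ≤ _ := by linarith [hfinal]
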